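/- If λ lies in the closure of the numerical range W(A) and |λ| = ‖A‖, then λ belongs to the maximal numerical range W₀(A). Consequently, W₀(A) ∩ {z : |z| = ‖A‖} = cl W(A) ∩ {z : |z| = ‖A‖}. -/

import Mathlib

open Filter Topology

/-- The numerical range `W(A) = {⟨Ax, x⟩ : ‖x‖ = 1}`. -/
def numRange {H : Type*} [NormedAddCommGroup H] [InnerProductSpace ℂ H]
    (A : H →L[ℂ] H) : Set ℂ :=
  {z | ∃ x : H, ‖x‖ = 1 ∧ (inner ℂ (A x) x : ℂ) = z}

/-- The maximal numerical range of a bounded linear operator `A` on a complex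
Hilbert space: the set of `λ ∈ ℂ` for which there is a sequence of unit vectors
`xₙ` with `‖A xₙ‖ → ‖A‖` and `⟨A xₙ, xₙ⟩ → λ`. -/
def maxNumRange {H : Type*} [NormedAddCommGroup H] [InnerProductSpace ℂ H]
    (A : H →L[ℂ] H) : Set ℂ :=
  {lam | ∃ x : ℕ → H, (∀ n, ‖x n‖ = 1) ∧
    Tendsto (fun n => ‖A (x n)‖) atTop (𝓝 ‖A‖) ∧
    Tendsto (fun n => (inner ℂ (A (x n)) (x n) : ℂ)) atTop (𝓝 lam)}

theorem maxNumRange_inter_circle {H : Type*} [NormedAddCommGroup H]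
    [InnerProductSpace ℂ H] (A : H →L[ℂ] H) :
    (∀ lam : ℂ, lam ∈ closure (numRange A) → ‖lam‖ = ‖A‖ →
      lam ∈ maxNumRange A) ∧
    maxNumRange A ∩ {z : ℂ | ‖z‖ = ‖A‖} =
      closure (numRange A) ∩ {z : ℂ | ‖z‖ = ‖A‖} := by
  have hmain : ∀ lam : ℂ, lam ∈ closure (numRange A) → ‖lam‖ = ‖A‖ →
      lam ∈ maxNumRange A := by
    intro lam hcl habs
    obtain ⟨z, hz, hztend⟩ := mem_closure_iff_seq_limit.mp hcl
    choose x hx1 hxz using hz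
    refine ⟨x, hx1, ?_, ?_⟩
    · -- squeeze: Complex.abs (z n) ≤ ‖A (x n)‖ ≤ ‖A‖
      have hlow : ∀ n, ‖z n‖ ≤ ‖A (x n)‖ := by
        intro n
        rw [← hxz n]
        calc ‖(inner ℂ (A (x n)) (x n) : ℂ)‖
            = ‖(inner ℂ (A (x n)) (x n) : ℂ)‖ := rfl
          _ ≤ ‖A (x n)‖ * ‖x n‖ := norm_inner_le_norm _ _
          _ = ‖A (x n)‖ := by rw [hx1 n, mul_one]
      have hup : ∀ n, ‖A (x n)‖ ≤ ‖A‖ := by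
        intro n
        calc ‖A (x n)‖ ≤ ‖A‖ * ‖x n‖ := A.le_opNorm _
          _ = ‖A‖ := by rw [hx1 n, mul_one]
      have habs_tend : Tendsto (fun n => ‖z n‖) atTop (𝓝 ‖A‖) := by
        have := (continuous_norm.tendsto lam).comp hztend
        rwa [habs] at this
      exact tendsto_of_tendsto_of_tendsto_of_le_of_le habs_tend tendsto_const_nhds
        hlow hup
    · simpa only [hxz] using hztend
  refine ⟨hmain, ?_⟩
  ext w
  simp only [Set.mem_inter_iff, Set.mem_setOf_eq]
  constructor
  · rintro ⟨⟨x, hx1, _, htend⟩, hw⟩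
    refine ⟨mem_closure_of_tendsto htend ?_, hw⟩
    filter_upwards with n
    exact ⟨x n, hx1 n, rfl⟩
  · rintro ⟨hcl, hw⟩
    exact ⟨hmain w hcl hw, hw⟩
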